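/- If the vertices of a graph G are partitioned into r independent sets of size 3, s independent sets of size 2, and t independent sets of size 1, and the maximum degree Δ of G satisfies 2Δ < |V(G)|, and r+s+t ≤ Δ, then for every integer m with r+s+t ≤ m ≤ Δ there is a partition of V(G) into a independent sets of size 3, b of size 2, and c of size 1 with a+b+c = m. -/

import Mathlib

open Finset

variable {V : Type*}

/-- `P` is the set of color classes of an `[r,s,t]`-coloring of `G`:
a partition of the vertices into independent sets, with `r` classes of size 3,
`s` classes of size 2 and `t` singleton classes. -/
def IsRST [Fintype V] [DecidableEq V] (G : SimpleGraph V) (P : Finset (Finset V))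
    (r s t : ℕ) : Prop :=
  (∀ v : V, ∃! A, A ∈ P ∧ v ∈ A) ∧
  (∀ A ∈ P, ∀ u ∈ A, ∀ w ∈ A, ¬ G.Adj u w) ∧
  (P.filter (fun A => A.card = 3)).card = r ∧
  (P.filter (fun A => A.card = 2)).card = s ∧
  (P.filter (fun A => A.card = 1)).card = t ∧
  (∀ A ∈ P, A.card = 1 ∨ A.card = 2 ∨ A.card = 3)

/-- A maximal `[r,s,t]`-coloring: for any other `[r',s',t']`-coloring,
either `r > r'`, or `r = r'` and `s ≥ s'`. -/
def IsMaxRST [Fintype V] [DecidableEq V] (G : SimpleGraph V) (P : Finset (Finset V))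
    (r s t : ℕ) : Prop :=
  IsRST G P r s t ∧
  ∀ (P' : Finset (Finset V)) (r' s' t' : ℕ), IsRST G P' r' s' t' →
    r' < r ∨ (r' = r ∧ s' ≤ s)

/-- `eB G X Y` is the number of edges with one endpoint in `X` and the other in `Y`. -/
def eB [Fintype V] [DecidableEq V] (G : SimpleGraph V) [DecidableRel G.Adj]
    (X Y : Finset V) : ℕ :=
  ((X ×ˢ Y).filter fun p => G.Adj p.1 p.2).card

/-- `G` is equitably `k`-colorable: a proper `k`-coloring whose color classes
have sizes differing pairwise by at most 1. -/
def EqColorable [Fintype V] (G : SimpleGraph V) (k : ℕ) : Prop :=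
  ∃ C : V → Fin k, (∀ u v, G.Adj u v → C u ≠ C v) ∧
    ∀ i j : Fin k,
      (Finset.univ.filter fun v => C v = i).card ≤
        (Finset.univ.filter fun v => C v = j).card + 1

lemma count_eq [DecidableEq V] (Q : Finset (Finset V))
    (h : ∀ A ∈ Q, A.card = 1 ∨ A.card = 2 ∨ A.card = 3) :
    (Q.filter (fun A => A.card = 3)).card + (Q.filter (fun A => A.card = 2)).card
      + (Q.filter (fun A => A.card = 1)).card = Q.card := by
  classical
  have h3 := Finset.card_filter_add_card_filter_not (s := Q)
    (p := fun A => A.card = 3)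
  have hunion : Q.filter (fun A => ¬ A.card = 3)
      = Q.filter (fun A => A.card = 2) ∪ Q.filter (fun A => A.card = 1) := by
    ext A
    simp only [mem_filter, mem_union]
    constructor
    · rintro ⟨hA, hh⟩
      rcases h A hA with h1 | h2 | h3' <;> tauto
    · rintro (⟨hA, h2⟩ | ⟨hA, h1⟩) <;> exact ⟨‹A ∈ Q›, by omega⟩
  have hdisj : Disjoint (Q.filter fun A => A.card = 2) (Q.filter fun A => A.card = 1) := by
    rw [Finset.disjoint_left]
    intro A hA hA'
    simp only [mem_filter] at hA hA'
    omega
  rw [hunion, Finset.card_union_of_disjoint hdisj] at h3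
  omega

lemma sum_card_eq [Fintype V] [DecidableEq V] (Q : Finset (Finset V))
    (h1 : ∀ v : V, ∃! A, A ∈ Q ∧ v ∈ A) :
    ∑ A ∈ Q, A.card = Fintype.card V := by
  classical
  have huniv : Q.biUnion id = Finset.univ := by
    ext v
    simp only [mem_biUnion, id, mem_univ, iff_true]
    obtain ⟨A, ⟨hA, hv⟩, -⟩ := h1 v
    exact ⟨A, hA, hv⟩
  have hdisj : ∀ A ∈ Q, ∀ B ∈ Q, A ≠ B → Disjoint (id A) (id B) := by
    intro A hA B hB hne
    rw [Finset.disjoint_left]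
    intro v hvA hvB
    exact hne (((h1 v).unique ⟨hA, hvA⟩ ⟨hB, hvB⟩))
  rw [← Finset.card_univ, ← huniv, Finset.card_biUnion hdisj]
  simp

lemma step_lemma [Fintype V] [DecidableEq V] (G : SimpleGraph V)
    (Q : Finset (Finset V)) (a b c : ℕ) (hQ : IsRST G Q a b c)
    (A : Finset V) (hA : A ∈ Q) (h2 : 2 ≤ A.card) :
    ∃ (Q' : Finset (Finset V)) (a' b' c' : ℕ),
      IsRST G Q' a' b' c' ∧ a' + b' + c' = a + b + c + 1 := by
  classical
  obtain ⟨hcov, hind, hf3, hf2, hf1, hsz⟩ := hQ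
  have hAne : A.Nonempty := Finset.card_pos.mp (by omega)
  obtain ⟨v, hvA⟩ := hAne
  set A2 : Finset V := A.erase v with hA2def
  have hA2card : A2.card = A.card - 1 := Finset.card_erase_of_mem hvA
  have hA2ne : A2.Nonempty := Finset.card_pos.mp (by omega)
  have hA2sub : A2 ⊆ A := Finset.erase_subset v A
  have hA2neA : A2 ≠ A := by
    intro h
    have := hA2card
    rw [h] at this
    omega
  have hvnotA2 : v ∉ A2 := Finset.notMem_erase v A
  have hsneA2 : ({v} : Finset V) ≠ A2 := by
    intro h
    exact hvnotA2 (h ▸ Finset.mem_singleton_self v)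
  have hsnotQ : ({v} : Finset V) ∉ Q := by
    intro h
    have heq : ({v} : Finset V) = A := (hcov v).unique ⟨h, Finset.mem_singleton_self v⟩ ⟨hA, hvA⟩
    have : ({v} : Finset V).card = A.card := by rw [heq]
    simp at this
    omega
  have hA2notQ : A2 ∉ Q := by
    intro h
    obtain ⟨w, hw⟩ := hA2ne
    exact hA2neA ((hcov w).unique ⟨h, hw⟩ ⟨hA, hA2sub hw⟩)
  set Q' : Finset (Finset V) := insert {v} (insert A2 (Q.erase A)) with hQ'def
  have hmem : ∀ B : Finset V, B ∈ Q' ↔ B = {v} ∨ B = A2 ∨ (B ∈ Q ∧ B ≠ A) := by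
    intro B
    simp only [hQ'def, Finset.mem_insert, Finset.mem_erase]
    tauto
  -- cardinality
  have hcard : Q'.card = Q.card + 1 := by
    have h1 : A2 ∉ Q.erase A := fun h => hA2notQ (Finset.mem_of_mem_erase h)
    have h2' : ({v} : Finset V) ∉ insert A2 (Q.erase A) := by
      simp only [Finset.mem_insert]
      rintro (h | h)
      · exact hsneA2 h
      · exact hsnotQ (Finset.mem_of_mem_erase h)
    rw [hQ'def, Finset.card_insert_of_notMem h2', Finset.card_insert_of_notMem h1,
      Finset.card_erase_of_mem hA]
    have : 1 ≤ Q.card := Finset.card_pos.mpr ⟨A, hA⟩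
    omega
  refine ⟨Q', (Q'.filter (fun B => B.card = 3)).card, (Q'.filter (fun B => B.card = 2)).card,
    (Q'.filter (fun B => B.card = 1)).card, ⟨?_, ?_, rfl, rfl, rfl, ?_⟩, ?_⟩
  · -- cover
    intro u
    obtain ⟨B, ⟨hBQ, huB⟩, hBuniq⟩ := hcov u
    by_cases hBA : B = A
    · subst hBA
      by_cases huv : u = v
      · refine ⟨{v}, ⟨(hmem _).mpr (Or.inl rfl), by simp [huv]⟩, ?_⟩
        rintro C ⟨hC, huC⟩
        rcases (hmem C).mp hC with rfl | rfl | ⟨hCQ, hCne⟩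
        · rfl
        · exact absurd (huv ▸ huC) hvnotA2
        · exact absurd (hBuniq C ⟨hCQ, huC⟩) hCne
      · refine ⟨A2, ⟨(hmem _).mpr (Or.inr (Or.inl rfl)), Finset.mem_erase.mpr ⟨huv, huB⟩⟩, ?_⟩
        rintro C ⟨hC, huC⟩
        rcases (hmem C).mp hC with rfl | rfl | ⟨hCQ, hCne⟩
        · exact absurd (Finset.mem_singleton.mp huC) huv
        · rfl
        · exact absurd (hBuniq C ⟨hCQ, huC⟩) hCne
    · refine ⟨B, ⟨(hmem _).mpr (Or.inr (Or.inr ⟨hBQ, hBA⟩)), huB⟩, ?_⟩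
      rintro C ⟨hC, huC⟩
      rcases (hmem C).mp hC with rfl | rfl | ⟨hCQ, hCne⟩
      · have huv : u = v := Finset.mem_singleton.mp huC
        exact absurd (hBuniq A ⟨hA, by rw [huv]; exact hvA⟩).symm hBA
      · exact absurd (hBuniq A ⟨hA, hA2sub huC⟩).symm hBA
      · exact hBuniq C ⟨hCQ, huC⟩
  · -- independence
    intro B hB u hu w hw
    rcases (hmem B).mp hB with rfl | rfl | ⟨hBQ, -⟩
    · rw [Finset.mem_singleton] at hu hw
      rw [hu, hw]
      exact G.loopless.irrefl v
    · exact hind A hA u (hA2sub hu) w (hA2sub hw)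
    · exact hind B hBQ u hu w hw
  · -- sizes
    intro B hB
    rcases (hmem B).mp hB with rfl | rfl | ⟨hBQ, -⟩
    · left; simp
    · have := hsz A hA
      omega
    · exact hsz B hBQ
  · -- count
    have hsz' : ∀ B ∈ Q', B.card = 1 ∨ B.card = 2 ∨ B.card = 3 := by
      intro B hB
      rcases (hmem B).mp hB with rfl | rfl | ⟨hBQ, -⟩
      · left; simp
      · have := hsz A hA; omega
      · exact hsz B hBQ
    rw [count_eq Q' hsz', hcard, ← count_eq Q hsz, hf3, hf2, hf1]

theorem stmt0 [Fintype V] [DecidableEq V] (G : SimpleGraph V) [DecidableRel G.Adj]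
    (P : Finset (Finset V)) (r s t : ℕ)
    (hP : IsRST G P r s t)
    (hΔ : 2 * G.maxDegree < Fintype.card V)
    (hle : r + s + t ≤ G.maxDegree) :
    ∀ m : ℕ, r + s + t ≤ m → m ≤ G.maxDegree →
      ∃ (Q : Finset (Finset V)) (a b c : ℕ), IsRST G Q a b c ∧ a + b + c = m := by
  intro m hm1 hm2
  induction m, hm1 using Nat.le_induction with
  | base => exact ⟨P, r, s, t, hP, rfl⟩
  | succ n hn ih =>
    obtain ⟨Q, a, b, c, hQ, habc⟩ := ih (by omega)
    have hsz := hQ.2.2.2.2.2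
    have hcardQ : Q.card = n := by
      rw [← count_eq Q hsz, hQ.2.2.1, hQ.2.2.2.1, hQ.2.2.2.2.1, habc]
    -- find a class of size ≥ 2
    have hex : ∃ A ∈ Q, 2 ≤ A.card := by
      by_contra hcon
      push_neg at hcon
      have hsum := sum_card_eq Q hQ.1
      have hle' : ∑ A ∈ Q, A.card ≤ Q.card * 1 := by
        apply Finset.sum_le_card_nsmul
        intro A hA
        have := hcon A hA
        omega
      omega
    obtain ⟨A, hA, hA2⟩ := hex
    obtain ⟨Q', a', b', c', hQ', hcount⟩ := step_lemma G Q a b c hQ A hA hA2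
    exact ⟨Q', a', b', c', hQ', by omega⟩
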